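/- Let 𝓕 ⊊ 2^[n] be s-extremal of the form 𝓕 = 𝓕(𝓢,h) with Sh(𝓕) = 𝓗(𝓢), for a Sperner family 𝓢 ⊆ 2^[n] and a function h : 𝓢 → 2^[n] with h(S) ⊆ S for every S ∈ 𝓢. Then there exists F ∈ 2^[n] \ 𝓕 such that 𝓕 ∪ {F} is s-extremal if and only if there exists S₀ ∈ 𝓢 such that Q_{S₀,h(S₀)} ⊄ ⋃_{S ∈ 𝓢\{S₀}} Q_{S,h(S)}. -/

import Mathlib

open Finset

/-- `𝓕` shatters `S` if every subset of `S` arises as `F ∩ S` for some `F ∈ 𝓕`. -/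
def Shatters {n : ℕ} (𝓕 : Finset (Finset (Fin n))) (S : Finset (Fin n)) : Prop :=
  𝓕.image (· ∩ S) = S.powerset

/-- The family of all subsets of `[n]` shattered by `𝓕`. -/
def ShFam {n : ℕ} (𝓕 : Finset (Finset (Fin n))) : Finset (Finset (Fin n)) :=
  Finset.univ.filter fun S => 𝓕.image (· ∩ S) = S.powerset

/-- A set system is shattering-extremal if it shatters exactly `|𝓕|` sets. -/
def SExtremal {n : ℕ} (𝓕 : Finset (Finset (Fin n))) : Prop :=
  (ShFam 𝓕).card = 𝓕.card

/-- A Sperner family: no member contains another member. -/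
def IsSperner {n : ℕ} (𝓢 : Finset (Finset (Fin n))) : Prop :=
  ∀ S ∈ 𝓢, ∀ S' ∈ 𝓢, S ⊆ S' → S = S'

/-- `Q S H = {T ⊆ [n] : T ∩ S = H}`. -/
def Q {n : ℕ} (S H : Finset (Fin n)) : Finset (Finset (Fin n)) :=
  Finset.univ.filter fun T => T ∩ S = H

/-- `𝓗(𝓢) = {T ⊆ [n] : no S ∈ 𝓢 satisfies S ⊆ T}`. -/
def HFam {n : ℕ} (𝓢 : Finset (Finset (Fin n))) : Finset (Finset (Fin n)) :=
  Finset.univ.filter fun T => ∀ S ∈ 𝓢, ¬ S ⊆ T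

/-- `𝓕(𝓢,h) = 2^[n] \ ⋃_{S ∈ 𝓢} Q_{S,h(S)}`. -/
def FFam {n : ℕ} (𝓢 : Finset (Finset (Fin n))) (h : Finset (Fin n) → Finset (Fin n)) :
    Finset (Finset (Fin n)) :=
  Finset.univ \ 𝓢.biUnion fun S => Q S (h S)


namespace StmtAux


variable {n : ℕ}

lemma mem_ShFam {𝓕 : Finset (Finset (Fin n))} {S : Finset (Fin n)} :
    S ∈ ShFam 𝓕 ↔ 𝓕.image (· ∩ S) = S.powerset := by
  simp [ShFam]

lemma shatters_iff {𝓕 : Finset (Finset (Fin n))} {S : Finset (Fin n)} :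
    S ∈ ShFam 𝓕 ↔ ∀ H ⊆ S, ∃ F ∈ 𝓕, F ∩ S = H := by
  rw [mem_ShFam]
  constructor
  · intro h H hH
    have : H ∈ 𝓕.image (· ∩ S) := by rw [h]; simpa using hH
    simpa using this
  · intro h
    refine Subset.antisymm ?_ ?_
    · intro H hH
      simp only [mem_image] at hH
      obtain ⟨F, _, rfl⟩ := hH
      simpa using inter_subset_right
    · intro H hH
      obtain ⟨F, hF, hFS⟩ := h H (mem_powerset.mp hH)
      exact mem_image.mpr ⟨F, hF, hFS⟩

lemma ShFam_mono {𝓕 𝓖 : Finset (Finset (Fin n))} (h : 𝓕 ⊆ 𝓖) :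
    ShFam 𝓕 ⊆ ShFam 𝓖 := by
  intro S hS
  rw [shatters_iff] at hS ⊢
  intro H hH
  obtain ⟨F, hF, hFS⟩ := hS H hH
  exact ⟨F, h hF, hFS⟩

lemma exists_superset_of_mem_ShFam {𝓕 : Finset (Finset (Fin n))} {T : Finset (Fin n)}
    (hT : T ∈ ShFam 𝓕) : ∃ F ∈ 𝓕, T ⊆ F := by
  obtain ⟨F, hF, hFT⟩ := shatters_iff.mp hT T Subset.rfl
  exact ⟨F, hF, inter_eq_right.mp hFT⟩

lemma not_mem_of_forall_not {𝓕 : Finset (Finset (Fin n))} {i : Fin n}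
    (h : ∀ F ∈ 𝓕, i ∉ F) {T : Finset (Fin n)} (hT : T ∈ ShFam 𝓕) : i ∉ T := by
  obtain ⟨F, hF, hTF⟩ := exists_superset_of_mem_ShFam hT
  exact fun hi => h F hF (hTF hi)

lemma not_mem_of_forall_mem {𝓕 : Finset (Finset (Fin n))} {i : Fin n}
    (h : ∀ F ∈ 𝓕, i ∈ F) {T : Finset (Fin n)} (hT : T ∈ ShFam 𝓕) : i ∉ T := by
  obtain ⟨F, hF, hFT⟩ := shatters_iff.mp hT ∅ (empty_subset T)
  intro hiT
  have : i ∈ F ∩ T := mem_inter.mpr ⟨h F hF, hiT⟩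
  rw [hFT] at this
  simp at this

theorem pajor (𝓖 : Finset (Finset (Fin n))) : 𝓖.card ≤ (ShFam 𝓖).card := by
  induction 𝓖 using Finset.strongInduction with
  | _ 𝓖 ih =>
  rcases eq_empty_or_nonempty 𝓖 with rfl | hne
  · simp
  by_cases hsing : ∀ G₁ ∈ 𝓖, ∀ G₂ ∈ 𝓖, G₁ = G₂
  · obtain ⟨G, hG⟩ := hne
    have h1 : 𝓖 = {G} := eq_singleton_iff_unique_mem.mpr ⟨hG, fun x hx => hsing x hx G hG⟩
    have h2 : (∅ : Finset (Fin n)) ∈ ShFam 𝓖 := by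
      rw [shatters_iff]
      intro H hH
      rw [subset_empty] at hH
      exact ⟨G, hG, by simp [hH]⟩
    rw [h1] at h2 ⊢
    simpa using card_pos.mpr ⟨∅, h2⟩
  · push_neg at hsing
    obtain ⟨G₁, hG₁, G₂, hG₂, hne12⟩ := hsing
    have hex : ∃ i : Fin n, (𝓖.filter (fun G => i ∉ G)).Nonempty ∧
        (𝓖.filter (fun G => i ∈ G)).Nonempty := by
      have : ∃ i, ¬ (i ∈ G₁ ↔ i ∈ G₂) := by
        by_contra hc
        push_neg at hc
        exact hne12 (Finset.ext fun a => hc a)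
      obtain ⟨i, hi⟩ := this
      rcases Decidable.em (i ∈ G₁) with h1 | h1
      · have h2 : i ∉ G₂ := fun h => hi ⟨fun _ => h, fun _ => h1⟩
        exact ⟨i, ⟨G₂, mem_filter.mpr ⟨hG₂, h2⟩⟩, ⟨G₁, mem_filter.mpr ⟨hG₁, h1⟩⟩⟩
      · have h2 : i ∈ G₂ := by
          by_contra h2
          exact hi ⟨fun h => absurd h h1, fun h => absurd h h2⟩
        exact ⟨i, ⟨G₁, mem_filter.mpr ⟨hG₁, h1⟩⟩, ⟨G₂, mem_filter.mpr ⟨hG₂, h2⟩⟩⟩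
    obtain ⟨i, h0ne, h1ne⟩ := hex
    set 𝓖₀ := 𝓖.filter (fun G => i ∉ G) with h𝓖₀
    set 𝓖₁ := 𝓖.filter (fun G => i ∈ G) with h𝓖₁
    have hss₀ : 𝓖₀ ⊂ 𝓖 := by
      rw [h𝓖₀, filter_ssubset]
      obtain ⟨G, hG⟩ := h1ne
      exact ⟨G, (mem_filter.mp hG).1, by simpa using (mem_filter.mp hG).2⟩
    have hss₁ : 𝓖₁ ⊂ 𝓖 := by
      rw [h𝓖₁, filter_ssubset]
      obtain ⟨G, hG⟩ := h0ne
      exact ⟨G, (mem_filter.mp hG).1, (mem_filter.mp hG).2⟩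
    have ih₀ := ih 𝓖₀ hss₀
    have ih₁ := ih 𝓖₁ hss₁
    set A := ShFam 𝓖₀ with hA
    set B := ShFam 𝓖₁ with hB
    have hAfree : ∀ T ∈ A, i ∉ T := fun T hT =>
      not_mem_of_forall_not (fun F hF => (mem_filter.mp hF).2) hT
    have hBfree : ∀ T ∈ B, i ∉ T := fun T hT =>
      not_mem_of_forall_mem (fun F hF => (mem_filter.mp hF).2) hT
    have hins : ∀ T ∈ A ∩ B, insert i T ∈ ShFam 𝓖 := by
      intro T hT
      have hiT : i ∉ T := hAfree T (mem_inter.mp hT).1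
      rw [shatters_iff]
      intro H hH
      by_cases hiH : i ∈ H
      · obtain ⟨F, hF, hFT⟩ := shatters_iff.mp (mem_inter.mp hT).2 (H.erase i)
          (fun x hx => by
            have := hH (mem_erase.mp hx).2
            rcases mem_insert.mp this with h | h
            · exact absurd h (mem_erase.mp hx).1
            · exact h)
        have hiF : i ∈ F := (mem_filter.mp hF).2
        refine ⟨F, (mem_filter.mp hF).1, ?_⟩
        ext x
        by_cases hx : x = i
        · subst hx; simp [hiF, hiH]
        · constructor
          · intro hxm
            have : x ∈ F ∩ T := by
              rcases mem_insert.mp (mem_inter.mp hxm).2 with h | h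
              · exact absurd h hx
              · exact mem_inter.mpr ⟨(mem_inter.mp hxm).1, h⟩
            rw [hFT] at this
            exact (mem_erase.mp this).2
          · intro hxH
            have : x ∈ F ∩ T := by rw [hFT]; exact mem_erase.mpr ⟨hx, hxH⟩
            exact mem_inter.mpr ⟨(mem_inter.mp this).1,
              mem_insert.mpr (Or.inr (mem_inter.mp this).2)⟩
      · have hHT : H ⊆ T := fun x hx => by
          rcases mem_insert.mp (hH hx) with h | h
          · exact absurd (h ▸ hx) hiH
          · exact h
        obtain ⟨F, hF, hFT⟩ := shatters_iff.mp (mem_inter.mp hT).1 H hHT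
        have hiF : i ∉ F := (mem_filter.mp hF).2
        refine ⟨F, (mem_filter.mp hF).1, ?_⟩
        rw [← hFT]
        ext x
        by_cases hx : x = i
        · subst hx; simp [hiF]
        · simp only [mem_inter, mem_insert]
          tauto
    have hAB : A ⊆ ShFam 𝓖 := ShFam_mono (filter_subset _ _)
    have hBB : B ⊆ ShFam 𝓖 := ShFam_mono (filter_subset _ _)
    have hsubU : (A ∪ B) ∪ (A ∩ B).image (insert i) ⊆ ShFam 𝓖 := by
      intro T hT
      rcases mem_union.mp hT with h | h
      · rcases mem_union.mp h with h | h
        · exact hAB h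
        · exact hBB h
      · obtain ⟨T', hT', rfl⟩ := mem_image.mp h
        exact hins T' hT'
    have hdisj : Disjoint (A ∪ B) ((A ∩ B).image (insert i)) := by
      rw [disjoint_left]
      intro T hT hT'
      obtain ⟨T', _, rfl⟩ := mem_image.mp hT'
      rcases mem_union.mp hT with h | h
      · exact hAfree _ h (mem_insert_self i T')
      · exact hBfree _ h (mem_insert_self i T')
    have hinj : ((A ∩ B).image (insert i)).card = (A ∩ B).card := by
      apply card_image_of_injOn
      intro T hT T' hT' hEq
      have h1 : i ∉ T := hAfree T (mem_inter.mp hT).1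
      have h2 : i ∉ T' := hAfree T' (mem_inter.mp hT').1
      have := congrArg (fun s => Finset.erase s i) hEq
      simpa [erase_insert h1, erase_insert h2] using this
    have hcount : 𝓖.card = 𝓖₀.card + 𝓖₁.card := by
      rw [h𝓖₀, h𝓖₁]
      rw [← card_filter_add_card_filter_not (p := fun G => i ∉ G)]
      simp
    calc 𝓖.card = 𝓖₀.card + 𝓖₁.card := hcount
      _ ≤ A.card + B.card := Nat.add_le_add ih₀ ih₁
      _ = (A ∪ B).card + (A ∩ B).card := (card_union_add_card_inter A B).symm
      _ = (A ∪ B).card + ((A ∩ B).image (insert i)).card := by rw [hinj]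
      _ = ((A ∪ B) ∪ (A ∩ B).image (insert i)).card := (card_union_of_disjoint hdisj).symm
      _ ≤ (ShFam 𝓖).card := card_le_card hsubU


theorem sextremal_image_erase {𝓕 : Finset (Finset (Fin n))} (i : Fin n)
    (hext : SExtremal 𝓕) : SExtremal (𝓕.image (·.erase i)) := by
  classical
  set 𝓕₀ := 𝓕.filter (fun F => i ∉ F) with h𝓕₀
  set 𝓕₁ := 𝓕.filter (fun F => i ∈ F) with h𝓕₁
  set 𝓕₁' := 𝓕₁.image (·.erase i) with h𝓕₁'
  set 𝓡 := 𝓕.image (·.erase i) with h𝓡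
  have h0id : 𝓕₀.image (·.erase i) = 𝓕₀ := by
    ext G
    simp only [mem_image]
    constructor
    · rintro ⟨F, hF, rfl⟩
      rwa [erase_eq_of_notMem ((mem_filter.mp hF).2)]
    · intro hG
      exact ⟨G, hG, erase_eq_of_notMem ((mem_filter.mp hG).2)⟩
  have hsplit : 𝓕₀ ∪ 𝓕₁ = 𝓕 := by
    rw [h𝓕₀, h𝓕₁, union_comm]
    ext F
    simp only [mem_union, mem_filter]
    tauto
  have hR : 𝓡 = 𝓕₀ ∪ 𝓕₁' := by
    rw [h𝓡, ← hsplit, image_union, h0id, h𝓕₁']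
  have h1card : 𝓕₁'.card = 𝓕₁.card := by
    apply card_image_of_injOn
    intro F hF F' hF' hEq
    have h1 : i ∈ F := (mem_filter.mp hF).2
    have h2 : i ∈ F' := (mem_filter.mp hF').2
    dsimp only at hEq
    rw [← insert_erase h1, ← insert_erase h2, hEq]
  have hcardF : 𝓕.card = 𝓡.card + (𝓕₀ ∩ 𝓕₁').card := by
    have c1 : 𝓕.card = 𝓕₀.card + 𝓕₁.card := by
      rw [← hsplit]
      apply card_union_of_disjoint
      rw [disjoint_left]
      intro F hF hF'
      exact (mem_filter.mp hF).2 (mem_filter.mp hF').2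
    rw [c1, ← h1card, hR, ← card_union_add_card_inter]
  -- free lemmas
  have h0free : ∀ F ∈ 𝓕₀, i ∉ F := fun F hF => (mem_filter.mp hF).2
  have h1free : ∀ F ∈ 𝓕₁', i ∉ F := by
    intro F hF
    obtain ⟨G, _, rfl⟩ := mem_image.mp hF
    exact notMem_erase i G
  have hRfree : ∀ F ∈ 𝓡, i ∉ F := by
    intro F hF
    obtain ⟨G, _, rfl⟩ := mem_image.mp hF
    exact notMem_erase i G
  -- key1 : for i ∉ T, T ∈ ShFam 𝓕 ↔ T ∈ ShFam 𝓡
  have key1 : ∀ T : Finset (Fin n), i ∉ T → (T ∈ ShFam 𝓕 ↔ T ∈ ShFam 𝓡) := by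
    intro T hiT
    have him : 𝓡.image (· ∩ T) = 𝓕.image (· ∩ T) := by
      rw [h𝓡, image_image]
      apply Finset.image_congr
      intro F _
      show F.erase i ∩ T = F ∩ T
      rw [erase_inter, erase_eq_of_notMem]
      rw [mem_inter]
      exact fun h => hiT h.2
    rw [mem_ShFam, mem_ShFam, him]
  -- key2 : for i ∈ T
  have key2 : ∀ T : Finset (Fin n), i ∈ T →
      (T ∈ ShFam 𝓕 ↔ (T.erase i ∈ ShFam 𝓕₀ ∧ T.erase i ∈ ShFam 𝓕₁')) := by
    intro T hiT
    constructor
    · intro hT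
      constructor
      · rw [shatters_iff]
        intro H hH
        have hiH : i ∉ H := fun h => (mem_erase.mp (hH h)).1 rfl
        obtain ⟨F, hF, hFT⟩ := shatters_iff.mp hT H (hH.trans (erase_subset _ _))
        have hiF : i ∉ F := by
          intro h
          exact hiH (hFT ▸ mem_inter.mpr ⟨h, hiT⟩)
        refine ⟨F, mem_filter.mpr ⟨hF, hiF⟩, ?_⟩
        rw [inter_erase, hFT, erase_eq_of_notMem hiH]
      · rw [shatters_iff]
        intro H hH
        have hiH : i ∉ H := fun h => (mem_erase.mp (hH h)).1 rfl
        have hsub : insert i H ⊆ T := insert_subset hiT (hH.trans (erase_subset _ _))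
        obtain ⟨F, hF, hFT⟩ := shatters_iff.mp hT (insert i H) hsub
        have hiF : i ∈ F := by
          have : i ∈ F ∩ T := hFT ▸ mem_insert_self i H
          exact (mem_inter.mp this).1
        refine ⟨F.erase i, mem_image.mpr ⟨F, mem_filter.mpr ⟨hF, hiF⟩, rfl⟩, ?_⟩
        rw [erase_inter, inter_erase, hFT, erase_insert hiH,
          erase_eq_of_notMem hiH]
    · rintro ⟨h0, h1⟩
      rw [shatters_iff]
      intro H hH
      by_cases hiH : i ∈ H
      · obtain ⟨F', hF', hFT⟩ := shatters_iff.mp h1 (H.erase i) (erase_subset_erase i hH)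
        obtain ⟨F, hF, rfl⟩ := mem_image.mp hF'
        have hiF : i ∈ F := (mem_filter.mp hF).2
        refine ⟨F, (mem_filter.mp hF).1, ?_⟩
        rw [erase_inter, inter_erase, erase_idem] at hFT
        have := congrArg (insert i) hFT
        rwa [insert_erase (mem_inter.mpr ⟨hiF, hiT⟩), insert_erase hiH] at this
      · have hHsub : H ⊆ T.erase i := by
          intro x hx
          exact mem_erase.mpr ⟨fun he => hiH (he ▸ hx), hH hx⟩
        obtain ⟨F, hF, hFT⟩ := shatters_iff.mp h0 H hHsub
        have hiF : i ∉ F := (mem_filter.mp hF).2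
        refine ⟨F, (mem_filter.mp hF).1, ?_⟩
        rw [inter_erase] at hFT
        rw [← hFT, erase_eq_of_notMem]
        rw [mem_inter]
        exact fun h => hiF h.1
  -- decomposition of ShFam 𝓕
  have hShEq : ShFam 𝓕 = ShFam 𝓡 ∪ (ShFam 𝓕₀ ∩ ShFam 𝓕₁').image (insert i) := by
    ext T
    by_cases hiT : i ∈ T
    · rw [mem_union]
      constructor
      · intro hT
        refine Or.inr (mem_image.mpr ⟨T.erase i, ?_, insert_erase hiT⟩)
        rw [mem_inter]
        exact (key2 T hiT).mp hT
      · rintro (h | h)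
        · exact absurd hiT (not_mem_of_forall_not hRfree h)
        · obtain ⟨T', hT', hins⟩ := mem_image.mp h
          rw [mem_inter] at hT'
          have hiT' : i ∉ T' := not_mem_of_forall_not h0free hT'.1
          have : T' = T.erase i := by rw [← hins, erase_insert hiT']
          rw [key2 T hiT]
          rw [this] at hT'
          exact hT'
    · rw [mem_union, key1 T hiT]
      constructor
      · exact Or.inl
      · rintro (h | h)
        · exact h
        · obtain ⟨T', _, hins⟩ := mem_image.mp h
          exact absurd (hins ▸ mem_insert_self i T') hiT
  have hShCard : (ShFam 𝓕).card = (ShFam 𝓡).card + (ShFam 𝓕₀ ∩ ShFam 𝓕₁').card := by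
    rw [hShEq, card_union_of_disjoint, card_image_of_injOn]
    · intro T hT T' hT' hEq
      have h1 : i ∉ T := not_mem_of_forall_not h0free (mem_inter.mp hT).1
      have h2 : i ∉ T' := not_mem_of_forall_not h0free (mem_inter.mp hT').1
      rw [← erase_insert h1, ← erase_insert h2, hEq]
    · rw [disjoint_left]
      intro T hT hT'
      obtain ⟨T', _, rfl⟩ := mem_image.mp hT'
      exact not_mem_of_forall_not hRfree hT (mem_insert_self i T')
  -- inequalities
  have hp1 : 𝓡.card ≤ (ShFam 𝓡).card := pajor 𝓡
  have hp2 : (𝓕₀ ∩ 𝓕₁').card ≤ (ShFam 𝓕₀ ∩ ShFam 𝓕₁').card := by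
    calc (𝓕₀ ∩ 𝓕₁').card ≤ (ShFam (𝓕₀ ∩ 𝓕₁')).card := pajor _
      _ ≤ (ShFam 𝓕₀ ∩ ShFam 𝓕₁').card := by
          apply card_le_card
          intro T hT
          exact mem_inter.mpr ⟨ShFam_mono inter_subset_left hT,
            ShFam_mono inter_subset_right hT⟩
  have := hext
  rw [SExtremal] at this ⊢
  rw [hShCard, hcardF] at this
  omega

theorem sextremal_image_sdiff (C : Finset (Fin n)) :
    ∀ 𝓕 : Finset (Finset (Fin n)), SExtremal 𝓕 → SExtremal (𝓕.image (· \ C)) := by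
  induction C using Finset.induction_on with
  | empty =>
    intro 𝓕 hext
    have : 𝓕.image (· \ (∅ : Finset (Fin n))) = 𝓕 := by
      ext G
      simp [sdiff_empty]
    rwa [this]
  | @insert a C ha ih =>
    intro 𝓕 hext
    have himg : (𝓕.image (· \ C)).image (·.erase a) = 𝓕.image (· \ insert a C) := by
      rw [image_image]
      congr 1
      funext F
      ext x
      simp only [Function.comp_apply, mem_erase, mem_sdiff, mem_insert]
      tauto
    rw [← himg]
    exact sextremal_image_erase a (ih 𝓕 hext)

theorem sextremal_image_inter {𝓕 : Finset (Finset (Fin n))} (S : Finset (Fin n))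
    (hext : SExtremal 𝓕) : SExtremal (𝓕.image (· ∩ S)) := by
  have himg : 𝓕.image (· ∩ S) = 𝓕.image (· \ (univ \ S)) := by
    congr 1
    funext F
    ext x
    simp only [mem_inter, mem_sdiff, mem_univ, true_and, not_not]
  rw [himg]
  exact sextremal_image_sdiff _ 𝓕 hext

lemma ShFam_image_inter (𝓕 : Finset (Finset (Fin n))) (S : Finset (Fin n)) :
    ShFam (𝓕.image (· ∩ S)) = ShFam 𝓕 ∩ S.powerset := by
  ext T
  simp only [mem_inter, mem_powerset]
  constructor
  · intro hT
    have hTS : T ⊆ S := by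
      obtain ⟨G, hG, hTG⟩ := exists_superset_of_mem_ShFam hT
      obtain ⟨F, _, rfl⟩ := mem_image.mp hG
      exact hTG.trans inter_subset_right
    refine ⟨?_, hTS⟩
    rw [shatters_iff] at hT ⊢
    intro H hH
    obtain ⟨G, hG, hGT⟩ := hT H hH
    obtain ⟨F, hF, rfl⟩ := mem_image.mp hG
    refine ⟨F, hF, ?_⟩
    rw [← hGT, inter_assoc, inter_eq_right.mpr hTS]
  · rintro ⟨hT, hTS⟩
    rw [shatters_iff] at hT ⊢
    intro H hH
    obtain ⟨F, hF, hFT⟩ := hT H hH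
    refine ⟨F ∩ S, mem_image.mpr ⟨F, hF, rfl⟩, ?_⟩
    rw [inter_assoc, inter_eq_right.mpr hTS, hFT]

lemma mem_FFam {𝓢 : Finset (Finset (Fin n))} {h : Finset (Fin n) → Finset (Fin n)}
    {G : Finset (Fin n)} : G ∈ FFam 𝓢 h ↔ ∀ S ∈ 𝓢, G ∩ S ≠ h S := by
  simp [FFam, Q, mem_sdiff, mem_biUnion]

lemma traces_lemma {𝓢 : Finset (Finset (Fin n))} {h : Finset (Fin n) → Finset (Fin n)}
    {𝓕 : Finset (Finset (Fin n))} (hSperner : IsSperner 𝓢) (hsub : ∀ S ∈ 𝓢, h S ⊆ S)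
    (hext : SExtremal 𝓕) (hF : 𝓕 = FFam 𝓢 h) (hSh : ShFam 𝓕 = HFam 𝓢) :
    ∀ S₀ ∈ 𝓢, ∀ H ⊆ S₀, H ≠ h S₀ → ∃ G ∈ 𝓕, G ∩ S₀ = H := by
  intro S₀ hS₀ H hH hne
  set 𝓡 := 𝓕.image (· ∩ S₀) with h𝓡
  have hRE : SExtremal 𝓡 := sextremal_image_inter S₀ hext
  have hShR : ShFam 𝓡 = S₀.powerset.erase S₀ := by
    rw [h𝓡, ShFam_image_inter, hSh]
    ext T
    simp only [mem_inter, mem_powerset, mem_erase, HFam, mem_filter, mem_univ, true_and]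
    constructor
    · rintro ⟨hall, hTS⟩
      exact ⟨fun he => hall S₀ hS₀ (he ▸ Subset.rfl), hTS⟩
    · rintro ⟨hne', hTS⟩
      refine ⟨?_, hTS⟩
      intro S hS hST
      have heq : S = S₀ := hSperner S hS S₀ hS₀ (hST.trans hTS)
      subst heq
      exact hne' (Subset.antisymm hTS hST)
  have hRsub : 𝓡 ⊆ S₀.powerset.erase (h S₀) := by
    intro G hG
    obtain ⟨F, hFmem, rfl⟩ := mem_image.mp hG
    refine mem_erase.mpr ⟨?_, mem_powerset.mpr inter_subset_right⟩
    intro heq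
    rw [hF, mem_FFam] at hFmem
    exact hFmem S₀ hS₀ heq
  have hcard : 𝓡.card = (S₀.powerset.erase (h S₀)).card := by
    have h1 : 𝓡.card = (ShFam 𝓡).card := hRE.symm
    rw [h1, hShR, card_erase_of_mem (mem_powerset.mpr Subset.rfl),
      card_erase_of_mem (mem_powerset.mpr (hsub S₀ hS₀))]
  have hReq : 𝓡 = S₀.powerset.erase (h S₀) :=
    eq_of_subset_of_card_le hRsub (le_of_eq hcard.symm)
  have hHm : H ∈ 𝓡 := by
    rw [hReq]
    exact mem_erase.mpr ⟨hne, mem_powerset.mpr hH⟩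
  obtain ⟨G, hG, hGH⟩ := mem_image.mp hHm
  exact ⟨G, hG, hGH⟩

lemma ShFam_insert {𝓢 : Finset (Finset (Fin n))} {h : Finset (Fin n) → Finset (Fin n)}
    {𝓕 : Finset (Finset (Fin n))} (hSperner : IsSperner 𝓢) (hsub : ∀ S ∈ 𝓢, h S ⊆ S)
    (hext : SExtremal 𝓕) (hF : 𝓕 = FFam 𝓢 h) (hSh : ShFam 𝓕 = HFam 𝓢)
    (F : Finset (Fin n)) :
    ShFam (insert F 𝓕) = HFam 𝓢 ∪ 𝓢.filter (fun S => F ∩ S = h S) := by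
  apply Subset.antisymm
  · intro T hT
    by_cases hTH : T ∈ HFam 𝓢
    · exact mem_union_left _ hTH
    · rw [HFam, mem_filter] at hTH
      push_neg at hTH
      obtain ⟨S, hS, hST⟩ := hTH (mem_univ T)
      have hSTeq : ∀ S' ∈ 𝓢, S' ⊆ T → S' = T := by
        intro S' hS' hS'T
        by_contra hneq
        have hx : ∃ x, x ∈ T ∧ x ∉ S' := by
          by_contra hc
          push_neg at hc
          exact hneq (Subset.antisymm hS'T hc)
        obtain ⟨x, hxT, hxS⟩ := hx
        obtain ⟨G₁, hG₁, hG₁T⟩ := shatters_iff.mp hT (h S') ((hsub S' hS').trans hS'T)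
        obtain ⟨G₂, hG₂, hG₂T⟩ := shatters_iff.mp hT (insert x (h S'))
          (insert_subset hxT ((hsub S' hS').trans hS'T))
        have e₁ : G₁ ∩ S' = h S' := by
          have h1 : G₁ ∩ T ∩ S' = G₁ ∩ S' := by
            rw [inter_assoc, inter_eq_right.mpr hS'T]
          rw [← h1, hG₁T]
          exact inter_eq_left.mpr (hsub S' hS')
        have e₂ : G₂ ∩ S' = h S' := by
          have h1 : G₂ ∩ T ∩ S' = G₂ ∩ S' := by
            rw [inter_assoc, inter_eq_right.mpr hS'T]
          rw [← h1, hG₂T, insert_inter_of_notMem hxS]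
          exact inter_eq_left.mpr (hsub S' hS')
        have hG₁F : G₁ = F := by
          rcases mem_insert.mp hG₁ with h1 | h1
          · exact h1
          · rw [hF, mem_FFam] at h1
            exact absurd e₁ (h1 S' hS')
        have hG₂F : G₂ = F := by
          rcases mem_insert.mp hG₂ with h1 | h1
          · exact h1
          · rw [hF, mem_FFam] at h1
            exact absurd e₂ (h1 S' hS')
        subst hG₁F
        subst hG₂F
        rw [hG₁T] at hG₂T
        have hxh : x ∈ h S' := by
          rw [hG₂T]
          exact mem_insert_self x (h S')
        exact hxS (hsub S' hS' hxh)
      have hTm : T ∈ 𝓢 := (hSTeq S hS hST) ▸ hS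
      obtain ⟨G, hG, hGT⟩ := shatters_iff.mp hT (h T) (hsub T hTm)
      have hGF : G = F := by
        rcases mem_insert.mp hG with h1 | h1
        · exact h1
        · rw [hF, mem_FFam] at h1
          exact absurd hGT (h1 T hTm)
      subst hGF
      exact mem_union_right _ (mem_filter.mpr ⟨hTm, hGT⟩)
  · intro T hT
    rcases mem_union.mp hT with hTH | hTf
    · exact ShFam_mono (subset_insert F 𝓕) (hSh ▸ hTH)
    · rw [mem_filter] at hTf
      obtain ⟨hT𝓢, hFT⟩ := hTf
      rw [shatters_iff]
      intro H hH
      by_cases hHe : H = h T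
      · exact ⟨F, mem_insert_self F 𝓕, by rw [hFT, hHe]⟩
      · obtain ⟨G, hG, hGH⟩ := traces_lemma hSperner hsub hext hF hSh T hT𝓢 H hH hHe
        exact ⟨G, mem_insert_of_mem hG, hGH⟩


end StmtAux

open StmtAux in
/-- Equivalence between the elimination conjecture and its cube formulation. -/
theorem stmt_10 {n : ℕ} (𝓕 𝓢 : Finset (Finset (Fin n)))
    (h : Finset (Fin n) → Finset (Fin n)) (hSperner : IsSperner 𝓢)
    (hsub : ∀ S ∈ 𝓢, h S ⊆ S) (hext : SExtremal 𝓕)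
    (hproper : 𝓕 ⊂ Finset.univ) (hF : 𝓕 = FFam 𝓢 h) (hSh : ShFam 𝓕 = HFam 𝓢) :
    (∃ F ∉ 𝓕, SExtremal (insert F 𝓕)) ↔
      ∃ S₀ ∈ 𝓢, ¬ (Q S₀ (h S₀) ⊆ (𝓢.erase S₀).biUnion fun S => Q S (h S)) := by
  have hHcard : (HFam 𝓢).card = 𝓕.card := by rw [← hSh]; exact hext
  have hdisj : ∀ F : Finset (Fin n),
      Disjoint (HFam 𝓢) (𝓢.filter (fun S => F ∩ S = h S)) := by
    intro F
    rw [disjoint_left]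
    intro S hSH hSf
    rw [HFam, mem_filter] at hSH
    exact hSH.2 S (mem_filter.mp hSf).1 Subset.rfl
  constructor
  · rintro ⟨F, hFnot, hFext⟩
    have hcard1 : (𝓢.filter (fun S => F ∩ S = h S)).card = 1 := by
      have h1 : (ShFam (insert F 𝓕)).card = (insert F 𝓕).card := hFext
      rw [ShFam_insert hSperner hsub hext hF hSh F, card_union_of_disjoint (hdisj F), hHcard,
        card_insert_of_notMem hFnot] at h1
      omega
    obtain ⟨S₀, hS₀eq⟩ := card_eq_one.mp hcard1
    have hS₀m : S₀ ∈ 𝓢.filter (fun S => F ∩ S = h S) := hS₀eq ▸ mem_singleton_self S₀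
    refine ⟨S₀, (mem_filter.mp hS₀m).1, ?_⟩
    intro hsubQ
    have hFQ : F ∈ Q S₀ (h S₀) := by
      rw [Q, mem_filter]
      exact ⟨mem_univ F, (mem_filter.mp hS₀m).2⟩
    have hmem := hsubQ hFQ
    rw [mem_biUnion] at hmem
    obtain ⟨S, hS, hFS⟩ := hmem
    rw [Q, mem_filter] at hFS
    have : S ∈ 𝓢.filter (fun S => F ∩ S = h S) :=
      mem_filter.mpr ⟨mem_of_mem_erase hS, hFS.2⟩
    rw [hS₀eq, mem_singleton] at this
    exact (ne_of_mem_erase hS) this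
  · rintro ⟨S₀, hS₀, hnsub⟩
    obtain ⟨F, hFQ, hFnot'⟩ := not_subset.mp hnsub
    rw [Q, mem_filter] at hFQ
    have hFS₀ : F ∩ S₀ = h S₀ := hFQ.2
    have hother : ∀ S ∈ 𝓢, S ≠ S₀ → F ∩ S ≠ h S := by
      intro S hS hne heq
      refine hFnot' (mem_biUnion.mpr ⟨S, mem_erase.mpr ⟨hne, hS⟩, ?_⟩)
      rw [Q, mem_filter]
      exact ⟨mem_univ F, heq⟩
    have hFnot : F ∉ 𝓕 := by
      rw [hF, mem_FFam]
      intro hall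
      exact hall S₀ hS₀ hFS₀
    refine ⟨F, hFnot, ?_⟩
    have hfilt : 𝓢.filter (fun S => F ∩ S = h S) = {S₀} := by
      apply Subset.antisymm
      · intro S hSm
        rw [mem_singleton]
        by_contra hne
        exact hother S (mem_filter.mp hSm).1 hne (mem_filter.mp hSm).2
      · intro S hSm
        rw [mem_singleton] at hSm
        subst hSm
        exact mem_filter.mpr ⟨hS₀, hFS₀⟩
    rw [SExtremal, ShFam_insert hSperner hsub hext hF hSh F,
      card_union_of_disjoint (hdisj F), hHcard, hfilt,
      card_singleton, card_insert_of_notMem hFnot]
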